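/- Let d ≥ 3 and n₁,…,n_d ≥ 2, and set Σ := 1 + ∑_{k=1}^d (n_k − 1). Let u^1,…,u^d and v^1,…,v^d be unit vectors with u^k, v^k ∈ ℝ^{n_k}, set 𝒰 := u^1 ⊗ ⋯ ⊗ u^d and 𝒱 := v^1 ⊗ ⋯ ⊗ v^d, and assume 𝒰 ≠ −𝒱. Fix complement frames for (u^k) and for (v^k), with tangent-frame tensors a_{k,j} and b_{k,j} respectively, and let P denote the orthogonal projection of the tensor space onto the span of {𝒰, 𝒱}. For real s, t, let C(s,t) be the family of 2(Σ−1) tensors consisting of s·(Id − P)(a_{k,j}) for all (k,j), together with t·(Id − P)(b_{k,j}) for all (k,j). Then ∫_0^∞ ∫_0^∞ q(C(λ, μ)) · e^{−‖λ𝒰 + μ𝒱‖²/2} dλ dμ = 2^{(2Σ−3)/2} · Γ((2Σ−1)/2) · ∫_0^{π/2} q(C(cos θ, sin θ)) / ‖cos θ · 𝒰 + sin θ · 𝒱‖^{2Σ−1} dθ, where Γ is the real Gamma function. -/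

import Mathlib

open MeasureTheory Real
open scoped RealInnerProductSpace

/-- The rank-1 tensor `u^1 ⊗ ⋯ ⊗ u^d`, as an element of the Euclidean space of
real-valued functions on `Fin n₁ × ⋯ × Fin n_d`. -/
noncomputable def rankOne {d : ℕ} {n : Fin d → ℕ}
    (u : ∀ k, EuclideanSpace ℝ (Fin (n k))) :
    EuclideanSpace ℝ (∀ k, Fin (n k)) :=
  (WithLp.equiv 2 _).symm fun i => ∏ k, u k (i k)

/-- The smallest singular value of a finite family of vectors. -/
noncomputable def smin {F ι : Type*} [NormedAddCommGroup F] [InnerProductSpace ℝ F]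
    [Fintype ι] (w : ι → F) : ℝ :=
  sInf {r : ℝ | ∃ x : ι → ℝ, ∑ i, x i ^ 2 = 1 ∧ r = ‖∑ i, x i • w i‖}

/-- `q(w) = √(det Gram(w)) / σ_min(w)` (with the convention `x / 0 = 0`). -/
noncomputable def qval {F ι : Type*} [NormedAddCommGroup F] [InnerProductSpace ℝ F]
    [Fintype ι] [DecidableEq ι] (w : ι → F) : ℝ :=
  Real.sqrt (Matrix.det (Matrix.of fun i j => ⟪w i, w j⟫)) / smin w

/-- The family `C(s, t)` of `2(Σ-1)` tensors: `s · (Id - P)(a_{k,j})` for the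
tangent-frame tensors of `u`, together with `t · (Id - P)(b_{k,j})` for the
tangent-frame tensors of `v`. -/
noncomputable def famC {d : ℕ} {n : Fin d → ℕ}
    (u v : ∀ k, EuclideanSpace ℝ (Fin (n k)))
    (U V : ∀ k, Fin (n k - 1) → EuclideanSpace ℝ (Fin (n k)))
    (P : EuclideanSpace ℝ (∀ k, Fin (n k)) →ₗ[ℝ] EuclideanSpace ℝ (∀ k, Fin (n k)))
    (s t : ℝ) :
    ((Σ k : Fin d, Fin (n k - 1)) ⊕ (Σ k : Fin d, Fin (n k - 1))) →
      EuclideanSpace ℝ (∀ k, Fin (n k)) :=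
  Sum.elim
    (fun kj => s • (rankOne (Function.update u kj.1 (U kj.1 kj.2)) -
      P (rankOne (Function.update u kj.1 (U kj.1 kj.2)))))
    (fun kj => t • (rankOne (Function.update v kj.1 (V kj.1 kj.2)) -
      P (rankOne (Function.update v kj.1 (V kj.1 kj.2)))))


open Set
open scoped Pointwise ENNReal

section AuxiliaryLemmas

variable {F ι : Type*} [NormedAddCommGroup F] [InnerProductSpace ℝ F] [Fintype ι]

lemma smin_nonneg (w : ι → F) : 0 ≤ smin w :=
  Real.sInf_nonneg (by rintro y ⟨x, _, rfl⟩; exact norm_nonneg _)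

lemma qval_nonneg [DecidableEq ι] (w : ι → F) : 0 ≤ qval w :=
  div_nonneg (Real.sqrt_nonneg _) (smin_nonneg w)

lemma smin_smul (w : ι → F) {r : ℝ} (hr : 0 ≤ r) :
    smin (fun i => r • w i) = r * smin w := by
  have hset : {s : ℝ | ∃ x : ι → ℝ, ∑ i, x i ^ 2 = 1 ∧ s = ‖∑ i, x i • r • w i‖}
      = r • {s : ℝ | ∃ x : ι → ℝ, ∑ i, x i ^ 2 = 1 ∧ s = ‖∑ i, x i • w i‖} := by
    have key : ∀ x : ι → ℝ, ‖∑ i, x i • r • w i‖ = r * ‖∑ i, x i • w i‖ := by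
      intro x
      have : ∑ i, x i • r • w i = r • ∑ i, x i • w i := by
        rw [Finset.smul_sum]
        exact Finset.sum_congr rfl fun i _ => smul_comm (x i) r (w i)
      rw [this, norm_smul, Real.norm_eq_abs, abs_of_nonneg hr]
    ext s
    constructor
    · rintro ⟨x, hx, rfl⟩
      exact ⟨‖∑ i, x i • w i‖, ⟨x, hx, rfl⟩, by simp only [smul_eq_mul]; rw [← key]⟩
    · rintro ⟨y, ⟨x, hx, rfl⟩, rfl⟩
      exact ⟨x, hx, by simp only [smul_eq_mul]; rw [key]⟩
  rw [smin, hset, Real.sInf_smul_of_nonneg hr, smul_eq_mul, smin]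

lemma qval_smul [DecidableEq ι] [Nonempty ι] (w : ι → F) {r : ℝ} (hr : 0 < r) :
    qval (fun i => r • w i) = r ^ (Fintype.card ι - 1) * qval w := by
  have hG : (Matrix.of fun i j => ⟪r • w i, r • w j⟫)
      = (r ^ 2) • Matrix.of fun i j => ⟪w i, w j⟫ := by
    ext i j
    simp only [Matrix.of_apply, Matrix.smul_apply, real_inner_smul_left, real_inner_smul_right,
      smul_eq_mul]
    ring
  have hcard : 1 ≤ Fintype.card ι := Fintype.card_pos
  rw [qval, qval, hG, Matrix.det_smul, smin_smul w hr.le,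
    show ((r ^ 2) ^ Fintype.card ι) = (r ^ Fintype.card ι) ^ 2 by ring,
    Real.sqrt_mul (sq_nonneg _), Real.sqrt_sq (pow_nonneg hr.le _),
    show r ^ Fintype.card ι = r * r ^ (Fintype.card ι - 1) by
      rw [← pow_succ']; congr 1; omega,
    mul_assoc, mul_div_mul_left _ _ hr.ne', mul_div_assoc]

lemma measurable_smin_comp [Nonempty ι] (W : ℝ × ℝ → ι → F)
    (hW : ∀ i, Continuous fun p => W p i) :
    Measurable fun p => smin (W p) := by
  classical
  set S : Set (ι → ℝ) := {x | ∑ i, x i ^ 2 = 1} with hS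
  have hSne : S.Nonempty := by
    inhabit ι
    refine ⟨fun i => if i = default then 1 else 0, ?_⟩
    simp [hS, Finset.sum_ite_eq', ite_pow]
  haveI : Nonempty S := hSne.to_subtype
  set e : ℕ → S := TopologicalSpace.denseSeq S with he
  have hdense : DenseRange e := TopologicalSpace.denseRange_denseSeq S
  have key : ∀ p, smin (W p) = ⨅ m : ℕ, ‖∑ i, (e m : ι → ℝ) i • W p i‖ := by
    intro p
    set g : S → ℝ := fun x => ‖∑ i, (x : ι → ℝ) i • W p i‖ with hg
    have hgc : Continuous g := by
      apply Continuous.norm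
      exact continuous_finset_sum _ fun i _ =>
        ((continuous_apply i).comp continuous_subtype_val).smul continuous_const
    have hrange : {r : ℝ | ∃ x : ι → ℝ, ∑ i, x i ^ 2 = 1 ∧ r = ‖∑ i, x i • W p i‖}
        = Set.range g := by
      ext s
      constructor
      · rintro ⟨x, hx, rfl⟩; exact ⟨⟨x, hx⟩, rfl⟩
      · rintro ⟨⟨x, hx⟩, rfl⟩; exact ⟨x, hx, rfl⟩
    rw [smin, hrange]
    have hbdd : BddBelow (Set.range (fun m => g (e m))) :=
      ⟨0, by rintro y ⟨m, rfl⟩; exact norm_nonneg _⟩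
    apply le_antisymm
    · exact le_ciInf fun m => csInf_le ⟨0, by rintro y ⟨x, rfl⟩; exact norm_nonneg _⟩ ⟨e m, rfl⟩
    · refine le_csInf (Set.range_nonempty g) ?_
      rintro y ⟨x, rfl⟩
      have hx : x ∈ closure (Set.range e) := hdense x
      have hgx : g x ∈ closure (g '' Set.range e) :=
        image_closure_subset_closure_image hgc ⟨x, hx, rfl⟩
      have hclosed : IsClosed {y : ℝ | (⨅ m : ℕ, g (e m)) ≤ y} :=
        isClosed_le continuous_const continuous_id
      refine hclosed.closure_subset_iff.mpr ?_ hgx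
      rintro y ⟨z, ⟨m, rfl⟩, rfl⟩
      exact ciInf_le hbdd m
  simp only [key]
  exact Measurable.iInf fun m =>
    ((continuous_finset_sum _ fun i _ => ((hW i).const_smul _)).norm).measurable

lemma measurable_qval_comp [Nonempty ι] [DecidableEq ι] (W : ℝ × ℝ → ι → F)
    (hW : ∀ i, Continuous fun p => W p i) :
    Measurable fun p => qval (W p) := by
  apply Measurable.div _ (measurable_smin_comp W hW)
  apply Continuous.measurable
  apply Real.continuous_sqrt.comp
  apply Continuous.matrix_det
  exact continuous_matrix fun i j => (hW i).inner (hW j)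


end AuxiliaryLemmas

lemma norm_rankOne_one {d : ℕ} {n : Fin d → ℕ}
    (u : ∀ k, EuclideanSpace ℝ (Fin (n k))) (hu : ∀ k, ‖u k‖ = 1) :
    ‖rankOne u‖ = 1 := by
  have hsum : ∀ k, ∑ j, u k j ^ 2 = 1 := by
    intro k
    have h := hu k
    rw [EuclideanSpace.norm_eq] at h
    have h2 : (∑ j, ‖u k j‖ ^ 2) = 1 := by
      have := congrArg (· ^ 2) h
      simpa [Real.sq_sqrt (Finset.sum_nonneg fun j _ => sq_nonneg _)] using this
    simpa [Real.norm_eq_abs, sq_abs] using h2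
  rw [EuclideanSpace.norm_eq]
  have : ∑ i : ∀ k, Fin (n k), ‖rankOne u i‖ ^ 2 = 1 := by
    have : ∀ i : ∀ k, Fin (n k), ‖rankOne u i‖ ^ 2 = ∏ k, u k (i k) ^ 2 := by
      intro i
      rw [show rankOne u i = ∏ k, u k (i k) from rfl]
      rw [Real.norm_eq_abs, sq_abs, Finset.prod_pow]
    rw [Finset.sum_congr rfl fun i _ => this i]
    rw [← Fintype.piFinset_univ,
      ← Finset.prod_univ_sum (fun k => (Finset.univ : Finset (Fin (n k))))
        (fun k j => u k j ^ 2)]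
    simp [hsum]
  rw [this, Real.sqrt_one]


lemma gauss_aux (N : ℕ) (hN : 1 ≤ N) {c : ℝ} (hc : 0 < c) :
    ∫⁻ r in Set.Ioi (0:ℝ), ENNReal.ofReal (r ^ (2*N) * Real.exp (-(c^2/2) * r^2))
      = ENNReal.ofReal ((2:ℝ) ^ ((2 * ((1 + N : ℕ) : ℝ) - 3)/2) *
          Real.Gamma ((2 * ((1 + N : ℕ) : ℝ) - 1)/2) / c ^ (2*(1+N) - 1)) := by
  have hb : 0 < c ^ 2 / 2 := by positivity
  have hq : (-1 : ℝ) < (2*N : ℕ) := neg_one_lt_zero.trans_le (Nat.cast_nonneg _)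
  have hint : IntegrableOn (fun r : ℝ => r ^ (2*N) * Real.exp (-(c^2/2) * r^2)) (Ioi 0) := by
    have h := integrableOn_rpow_mul_exp_neg_mul_sq hb hq
    refine h.congr_fun ?_ measurableSet_Ioi
    intro x hx
    show x ^ ((2*N:ℕ):ℝ) * Real.exp (-(c^2/2) * x^2) = x ^ (2*N) * Real.exp (-(c^2/2) * x^2)
    rw [Real.rpow_natCast]
  rw [← ofReal_integral_eq_lintegral_ofReal hint
      (Filter.Eventually.of_forall fun r =>
        mul_nonneg (Even.pow_nonneg (even_two_mul N) r) (Real.exp_nonneg _))]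
  congr 1
  have heq : ∫ r in Ioi (0:ℝ), r ^ (2*N) * Real.exp (-(c^2/2) * r^2)
      = ∫ r in Ioi (0:ℝ), r ^ ((2*N : ℕ) : ℝ) * Real.exp (-(c^2/2) * r ^ (2:ℝ)) := by
    refine setIntegral_congr_fun measurableSet_Ioi fun x hx => ?_
    rw [Real.rpow_natCast, show ((2:ℝ)) = ((2:ℕ):ℝ) by norm_num, Real.rpow_natCast]
  rw [heq, integral_rpow_mul_exp_neg_mul_rpow (by norm_num) hq hb]
  -- (c^2/2) ^ (-(2N+1)/2) * (1/2) * Γ((2N+1)/2) = 2^((2(1+N)-3)/2) * Γ((2(1+N)-1)/2) / c^(2N+1)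
  have hGamma : ((2*N : ℕ) + 1 : ℝ) / 2 = (2 * ((1 + N : ℕ) : ℝ) - 1)/2 := by push_cast; ring
  rw [hGamma]
  rw [show (2*(1+N) - 1) = 2*N+1 by omega]
  have hpow : (c ^ 2 / 2 : ℝ) ^ (-(((2*N : ℕ):ℝ) + 1) / 2)
      = (2:ℝ) ^ ((((2*N:ℕ):ℝ) + 1) / 2) / c ^ (2*N+1) := by
    rw [Real.div_rpow (by positivity) (by norm_num)]
    rw [← Real.rpow_natCast c 2, ← Real.rpow_mul hc.le]
    rw [show ((2:ℕ):ℝ) * (-((((2*N:ℕ)):ℝ) + 1) / 2) = -(((2*N+1 : ℕ)):ℝ) by push_cast; ring]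
    rw [Real.rpow_neg hc.le, Real.rpow_natCast,
      show (-(((2*N:ℕ):ℝ) + 1) / 2) = -((((2*N:ℕ):ℝ) + 1) / 2) by ring,
      Real.rpow_neg (by norm_num : (0:ℝ) ≤ 2)]
    have hcp : (0:ℝ) < c ^ (2*N+1) := by positivity
    have h2p : (0:ℝ) < (2:ℝ) ^ ((((2*N:ℕ):ℝ) + 1) / 2) := Real.rpow_pos_of_pos (by norm_num) _
    field_simp
  rw [hpow]
  have h2 : (2:ℝ) ^ ((2 * ((1 + N : ℕ) : ℝ) - 3)/2)
      = (2:ℝ) ^ ((((2*N:ℕ):ℝ) + 1) / 2) * (1/2) := by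
    rw [show ((2 * ((1 + N : ℕ) : ℝ) - 3)/2) = (((2*N:ℕ):ℝ) + 1) / 2 + (-1) by push_cast; ring,
      Real.rpow_add (by norm_num), Real.rpow_neg_one]
    norm_num
  rw [h2]
  ring

lemma polar_image :
    (fun p : ℝ × ℝ => (p.1 * cos p.2, p.1 * sin p.2)) '' (Ioi (0:ℝ) ×ˢ Ioo 0 (π/2))
      = Ioi (0:ℝ) ×ˢ Ioi (0:ℝ) := by
  ext ⟨x, y⟩
  constructor
  · rintro ⟨⟨r, θ⟩, ⟨hr, hθ⟩, heq⟩
    obtain ⟨rfl, rfl⟩ : r * cos θ = x ∧ r * sin θ = y := Prod.mk.injEq .. ▸ Prod.ext_iff.mp heq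
    simp only [mem_Ioi, mem_Ioo, mem_prod] at *
    constructor
    · exact mul_pos hr (Real.cos_pos_of_mem_Ioo ⟨by linarith [Real.pi_pos, hθ.1], hθ.2⟩)
    · exact mul_pos hr (Real.sin_pos_of_pos_of_lt_pi hθ.1 (by linarith [Real.pi_pos]))
  · rintro ⟨hx, hy⟩
    simp only [mem_Ioi] at hx hy
    set r : ℝ := Real.sqrt (x^2 + y^2) with hrdef
    have hr : 0 < r := Real.sqrt_pos.mpr (by positivity)
    have hr2 : r ^ 2 = x^2 + y^2 := Real.sq_sqrt (by positivity)
    have hyr : y / r < 1 := by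
      rw [div_lt_one hr]
      nlinarith [hr2, sq_nonneg (y - r)]
    have hyr0 : 0 < y / r := div_pos hy hr
    refine ⟨(r, Real.arcsin (y / r)), ⟨hr, Real.arcsin_pos.mpr hyr0,
      Real.arcsin_lt_pi_div_two.mpr hyr⟩, ?_⟩
    have hsin : Real.sin (Real.arcsin (y / r)) = y / r :=
      Real.sin_arcsin (by linarith) hyr.le
    have hcos : Real.cos (Real.arcsin (y / r)) = x / r := by
      rw [Real.cos_arcsin]
      rw [show 1 - (y/r)^2 = (x/r)^2 by field_simp; linarith [hr2]]
      exact Real.sqrt_sq (by positivity)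
    simp only [hsin, hcos]
    have : r * (x / r) = x := by field_simp
    have h2 : r * (y / r) = y := by field_simp
    simp [this, h2]
  done

lemma polar_injOn :
    Set.InjOn (fun p : ℝ × ℝ => (p.1 * cos p.2, p.1 * sin p.2))
      (Ioi (0:ℝ) ×ˢ Ioo 0 (π/2)) := by
  rintro ⟨r₁, θ₁⟩ ⟨hr₁, hθ₁⟩ ⟨r₂, θ₂⟩ ⟨hr₂, hθ₂⟩ h
  simp only [mem_Ioi, mem_Ioo, Prod.mk.injEq] at *
  obtain ⟨h1, h2⟩ := h
  have hsq : r₁ ^ 2 = r₂ ^ 2 := by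
    have e1 : r₁^2 = (r₁ * cos θ₁)^2 + (r₁ * sin θ₁)^2 := by
      have := Real.sin_sq_add_cos_sq θ₁; nlinarith [this]
    have e2 : r₂^2 = (r₂ * cos θ₂)^2 + (r₂ * sin θ₂)^2 := by
      have := Real.sin_sq_add_cos_sq θ₂; nlinarith [this]
    rw [e1, e2, h1, h2]
  have hrr : r₁ = r₂ := by nlinarith [hr₁, hr₂]
  subst hrr
  have hs : sin θ₁ = sin θ₂ := by
    have := mul_left_cancel₀ (ne_of_gt hr₁) h2
    exact this
  have : θ₁ = θ₂ := by
    apply Real.injOn_sin ⟨by linarith [Real.pi_pos, hθ₁.1], hθ₁.2.le⟩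
      ⟨by linarith [Real.pi_pos, hθ₂.1], hθ₂.2.le⟩ hs
  simp [this]


/-- Lemma 5.3 of the paper: with `P` the orthogonal projection onto `span{𝒰, 𝒱}`,
`∫_0^∞ ∫_0^∞ q(C(λ, μ)) e^{-‖λ𝒰 + μ𝒱‖²/2} dλ dμ
  = 2^{(2Σ-3)/2} Γ((2Σ-1)/2) ∫_0^{π/2} q(C(cos θ, sin θ)) / ‖cos θ 𝒰 + sin θ 𝒱‖^{2Σ-1} dθ`. -/
theorem famC_integral_identity (d : ℕ) (hd : 3 ≤ d) (n : Fin d → ℕ) (hn : ∀ k, 2 ≤ n k)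
    (u v : ∀ k, EuclideanSpace ℝ (Fin (n k)))
    (U V : ∀ k, Fin (n k - 1) → EuclideanSpace ℝ (Fin (n k)))
    (hu : ∀ k, ‖u k‖ = 1) (hv : ∀ k, ‖v k‖ = 1)
    (hUon : ∀ k, Orthonormal ℝ (U k)) (hUperp : ∀ k j, ⟪u k, U k j⟫ = 0)
    (hVon : ∀ k, Orthonormal ℝ (V k)) (hVperp : ∀ k j, ⟪v k, V k j⟫ = 0)
    (hUV : rankOne u ≠ -rankOne v)
    (P : EuclideanSpace ℝ (∀ k, Fin (n k)) →ₗ[ℝ] EuclideanSpace ℝ (∀ k, Fin (n k)))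
    (hP1 : ∀ x, P x ∈ Submodule.span ℝ ({rankOne u, rankOne v} :
      Set (EuclideanSpace ℝ (∀ k, Fin (n k)))))
    (hP2 : ∀ x ∈ Submodule.span ℝ ({rankOne u, rankOne v} :
      Set (EuclideanSpace ℝ (∀ k, Fin (n k)))), P x = x)
    (hP3 : ∀ x y, ⟪P x, y⟫ = ⟪x, P y⟫) :
    (∫⁻ l in Set.Ioi (0 : ℝ), ∫⁻ m in Set.Ioi (0 : ℝ),
        ENNReal.ofReal (qval (famC u v U V P l m) *
          Real.exp (-‖l • rankOne u + m • rankOne v‖ ^ 2 / 2)))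
      = ENNReal.ofReal ((2 : ℝ) ^ ((2 * ((1 + ∑ k, (n k - 1) : ℕ) : ℝ) - 3) / 2) *
          Real.Gamma ((2 * ((1 + ∑ k, (n k - 1) : ℕ) : ℝ) - 1) / 2)) *
        ∫⁻ θ in Set.Ioc (0 : ℝ) (π / 2),
          ENNReal.ofReal (qval (famC u v U V P (Real.cos θ) (Real.sin θ)) /
            ‖Real.cos θ • rankOne u + Real.sin θ • rankOne v‖ ^
              (2 * (1 + ∑ k, (n k - 1)) - 1)) := by
  classical
  have hd0 : 0 < d := by omega
  set N : ℕ := ∑ k, (n k - 1) with hNdef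
  haveI : Nonempty ((Σ k : Fin d, Fin (n k - 1)) ⊕ (Σ k : Fin d, Fin (n k - 1))) :=
    ⟨Sum.inl ⟨⟨0, hd0⟩, ⟨0, by have := hn ⟨0, hd0⟩; omega⟩⟩⟩
  haveI : Nonempty (Fin d) := ⟨⟨0, hd0⟩⟩
  have hN1 : 1 ≤ N := by
    have : 0 < N := Finset.sum_pos (fun k _ => by have := hn k; omega) Finset.univ_nonempty
    omega
  have hcard : Fintype.card ((Σ k : Fin d, Fin (n k - 1)) ⊕ (Σ k : Fin d, Fin (n k - 1)))
      = 2 * N := by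
    simp [Fintype.card_sum, Fintype.card_sigma, Fintype.card_fin, two_mul, hNdef]
  -- the integrand as a function of the pair
  set Φ : ℝ × ℝ → ℝ≥0∞ := fun p => ENNReal.ofReal (qval (famC u v U V P p.1 p.2) *
    Real.exp (-‖p.1 • rankOne u + p.2 • rankOne v‖ ^ 2 / 2)) with hΦdef
  -- measurability
  have hWcont : ∀ i, Continuous fun p : ℝ × ℝ => famC u v U V P p.1 p.2 i := by
    rintro (kj | kj)
    · exact continuous_fst.smul continuous_const
    · exact continuous_snd.smul continuous_const
  have hQm : Measurable fun p : ℝ × ℝ => qval (famC u v U V P p.1 p.2) :=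
    measurable_qval_comp _ hWcont
  have hEcont : Continuous fun p : ℝ × ℝ =>
      Real.exp (-‖p.1 • rankOne u + p.2 • rankOne v‖ ^ 2 / 2) := by
    apply Real.continuous_exp.comp
    apply Continuous.div_const
    apply Continuous.neg
    exact (((continuous_fst.smul continuous_const).add
      (continuous_snd.smul continuous_const)).norm).pow 2
  have hΦm : Measurable Φ := (hQm.mul hEcont.measurable).ennreal_ofReal
  -- the polar map and its derivative
  set fmap : ℝ × ℝ → ℝ × ℝ := fun p => (p.1 * cos p.2, p.1 * sin p.2) with hfmapdef
  have hfmapc : Continuous fmap :=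
    (continuous_fst.mul (Real.continuous_cos.comp continuous_snd)).prodMk
      (continuous_fst.mul (Real.continuous_sin.comp continuous_snd))
  set B : ℝ × ℝ → ℝ × ℝ →L[ℝ] ℝ × ℝ := fun p =>
    LinearMap.toContinuousLinearMap (Matrix.toLin (Module.Basis.finTwoProd ℝ) (Module.Basis.finTwoProd ℝ)
      !![cos p.2, -p.1 * sin p.2; sin p.2, p.1 * cos p.2]) with hBdef
  have hBdet : ∀ p, (B p).det = p.1 := by
    intro p
    conv_rhs => rw [← one_mul p.1, ← cos_sq_add_sin_sq p.2]
    simp only [hBdef, neg_mul, LinearMap.det_toContinuousLinearMap, LinearMap.det_toLin,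
      Matrix.det_fin_two_of, sub_neg_eq_add]
    ring
  have hBder : ∀ p ∈ (Ioi (0:ℝ) ×ˢ Ioo 0 (π/2)),
      HasFDerivWithinAt fmap (B p) (Ioi (0:ℝ) ×ˢ Ioo 0 (π/2)) p := by
    intro p _
    have h := hasFDerivAt_polarCoord_symm p
    have hfe : (⇑(polarCoord.symm)) = fmap := rfl
    rw [hfe] at h
    exact h.hasFDerivWithinAt
  -- homogeneity of the family
  have hfam : ∀ (r s t : ℝ), famC u v U V P (r*s) (r*t)
      = fun i => r • famC u v U V P s t i := by
    intro r s t
    funext i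
    cases i <;> simp [famC, mul_smul]
  -- positivity of the norm on the quarter circle
  have h𝒰 : ‖rankOne u‖ = 1 := norm_rankOne_one u hu
  have h𝒱 : ‖rankOne v‖ = 1 := norm_rankOne_one v hv
  have hcpos : ∀ θ ∈ Ioo (0:ℝ) (π/2), 0 < ‖cos θ • rankOne u + sin θ • rankOne v‖ := by
    intro θ hθ
    have hcosθ : 0 < cos θ :=
      Real.cos_pos_of_mem_Ioo ⟨by linarith [Real.pi_pos, hθ.1], hθ.2⟩
    have hsinθ : 0 < sin θ :=
      Real.sin_pos_of_pos_of_lt_pi hθ.1 (by linarith [Real.pi_pos, hθ.2])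
    refine norm_pos_iff.mpr fun h => ?_
    have heq : cos θ • rankOne u = -(sin θ • rankOne v) := eq_neg_of_add_eq_zero_left h
    have hnorm : cos θ = sin θ := by
      have := congrArg norm heq
      rwa [norm_smul, norm_neg, norm_smul, Real.norm_eq_abs, Real.norm_eq_abs, h𝒰, h𝒱,
        mul_one, mul_one, abs_of_pos hcosθ, abs_of_pos hsinθ] at this
    apply hUV
    apply smul_right_injective _ (ne_of_gt hcosθ)
    show cos θ • rankOne u = cos θ • (-rankOne v)
    rw [heq, smul_neg, hnorm]
  -- constant
  set K : ℝ := (2 : ℝ) ^ ((2 * ((1 + N : ℕ) : ℝ) - 3) / 2) *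
      Real.Gamma ((2 * ((1 + N : ℕ) : ℝ) - 1) / 2) with hKdef
  have hK0 : 0 ≤ K := by
    apply mul_nonneg (Real.rpow_nonneg (by norm_num) _)
    apply (Real.Gamma_pos_of_pos ?_).le
    have h1 : (1:ℝ) ≤ ((1 + N : ℕ) : ℝ) := by exact_mod_cast Nat.le_add_right 1 N
    linarith
  -- inner integral computation
  have innerstep : ∀ θ ∈ Ioo (0:ℝ) (π/2),
      (∫⁻ r in Ioi (0:ℝ), ENNReal.ofReal r * Φ (fmap (r, θ)))
        = ENNReal.ofReal K * ENNReal.ofReal (qval (famC u v U V P (cos θ) (sin θ)) /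
            ‖cos θ • rankOne u + sin θ • rankOne v‖ ^ (2*(1+N) - 1)) := by
    intro θ hθ
    have hc : 0 < ‖cos θ • rankOne u + sin θ • rankOne v‖ := hcpos θ hθ
    set c : ℝ := ‖cos θ • rankOne u + sin θ • rankOne v‖ with hcdef
    set Q : ℝ := qval (famC u v U V P (cos θ) (sin θ)) with hQdef
    have hQ0 : 0 ≤ Q := qval_nonneg _
    have key : ∀ r ∈ Ioi (0:ℝ), ENNReal.ofReal r * Φ (fmap (r, θ))
        = ENNReal.ofReal Q * ENNReal.ofReal (r ^ (2*N) * Real.exp (-(c^2/2) * r^2)) := by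
      intro r hr
      rw [mem_Ioi] at hr
      have h2 : qval (famC u v U V P (r * cos θ) (r * sin θ)) = r ^ (2*N - 1) * Q := by
        rw [hfam r (cos θ) (sin θ), qval_smul _ hr, hcard]
      have h3 : ‖(r * cos θ) • rankOne u + (r * sin θ) • rankOne v‖ = r * c := by
        rw [mul_smul, mul_smul, ← smul_add, norm_smul, Real.norm_eq_abs, abs_of_pos hr]
      have hΦval : Φ (fmap (r, θ)) = ENNReal.ofReal ((r ^ (2*N - 1) * Q) *
          Real.exp (-(r * c)^2 / 2)) := by
        rw [hΦdef]
        simp only [hfmapdef]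
        rw [h2, h3]
      rw [hΦval, ← ENNReal.ofReal_mul hr.le]
      rw [show (-(r * c)^2 / 2) = (-(c^2/2) * r^2) by ring]
      have hrr : r * r ^ (2*N - 1) = r ^ (2*N) := by
        rw [← pow_succ']
        congr 1
        omega
      rw [show r * (r ^ (2*N - 1) * Q * Real.exp (-(c^2/2) * r^2))
          = Q * (r ^ (2*N) * Real.exp (-(c^2/2) * r^2)) by rw [← hrr]; ring]
      rw [ENNReal.ofReal_mul hQ0]
    rw [setLIntegral_congr_fun measurableSet_Ioi key]
    rw [lintegral_const_mul' _ _ ENNReal.ofReal_ne_top]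
    rw [gauss_aux N hN1 hc]
    rw [← ENNReal.ofReal_mul hQ0]
    rw [show Q * (K / c ^ (2*(1+N) - 1)) = K * (Q / c ^ (2*(1+N) - 1)) by ring]
    rw [ENNReal.ofReal_mul hK0]
  -- main chain
  calc
    (∫⁻ l in Set.Ioi (0 : ℝ), ∫⁻ m in Set.Ioi (0 : ℝ),
        ENNReal.ofReal (qval (famC u v U V P l m) *
          Real.exp (-‖l • rankOne u + m • rankOne v‖ ^ 2 / 2)))
      = ∫⁻ p in Ioi (0:ℝ) ×ˢ Ioi (0:ℝ), Φ p := by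
        rw [Measure.volume_eq_prod ℝ ℝ, ← Measure.prod_restrict,
          lintegral_prod _ hΦm.aemeasurable]
    _ = ∫⁻ p in Ioi (0:ℝ) ×ˢ Ioo 0 (π/2),
          ENNReal.ofReal |(B p).det| * Φ (fmap p) := by
        rw [← polar_image]
        exact lintegral_image_eq_lintegral_abs_det_fderiv_mul volume
          (measurableSet_Ioi.prod measurableSet_Ioo) hBder polar_injOn Φ
    _ = ∫⁻ p in Ioi (0:ℝ) ×ˢ Ioo 0 (π/2), ENNReal.ofReal p.1 * Φ (fmap p) := by
        refine setLIntegral_congr_fun (measurableSet_Ioi.prod measurableSet_Ioo)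
          (fun p hp => ?_)
        rw [hBdet, abs_of_pos hp.1]
    _ = ∫⁻ θ in Ioo (0:ℝ) (π/2), ∫⁻ r in Ioi (0:ℝ),
          ENNReal.ofReal r * Φ (fmap (r, θ)) := by
        rw [Measure.volume_eq_prod ℝ ℝ, ← Measure.prod_restrict,
          lintegral_prod_symm (fun p : ℝ × ℝ => ENNReal.ofReal p.1 * Φ (fmap p))
            ((measurable_fst.ennreal_ofReal.mul
              (hΦm.comp hfmapc.measurable)).aemeasurable)]
    _ = ∫⁻ θ in Ioo (0:ℝ) (π/2), ENNReal.ofReal K *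
          ENNReal.ofReal (qval (famC u v U V P (cos θ) (sin θ)) /
            ‖cos θ • rankOne u + sin θ • rankOne v‖ ^ (2*(1+N) - 1)) := by
        exact setLIntegral_congr_fun measurableSet_Ioo
          innerstep
    _ = ENNReal.ofReal K * ∫⁻ θ in Ioo (0:ℝ) (π/2),
          ENNReal.ofReal (qval (famC u v U V P (cos θ) (sin θ)) /
            ‖cos θ • rankOne u + sin θ • rankOne v‖ ^ (2*(1+N) - 1)) :=
        lintegral_const_mul' _ _ ENNReal.ofReal_ne_top
    _ = ENNReal.ofReal K * ∫⁻ θ in Ioc (0:ℝ) (π/2),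
          ENNReal.ofReal (qval (famC u v U V P (cos θ) (sin θ)) /
            ‖cos θ • rankOne u + sin θ • rankOne v‖ ^ (2*(1+N) - 1)) := by
        rw [setLIntegral_congr Ioo_ae_eq_Ioc]
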